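/- The contraction poset of ν-Schröder paths admits an acyclic partial matching (in the sense of discrete Morse theory) whose unique critical element is the path N^a E^b; the matching pairs each path σ having a D step not preceded by any valley with the path π obtained by replacing the first such D step by EN. -/

import Mathlib

/-- Steps of a (Schröder) lattice path: north, east, diagonal. -/
inductive Step : Type
  | N | E | D
deriving DecidableEq, Repr

/-- Total horizontal displacement of a path. -/
def eLen (p : List Step) : ℕ := p.count Step.E + p.count Step.D

/-- Total vertical displacement of a path. -/
def nLen (p : List Step) : ℕ := p.count Step.N + p.count Step.D

/-- A lattice path uses only `N` and `E` steps. -/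
def IsLatticePath (ν : List Step) : Prop := Step.D ∉ ν

/-- `colVal p x` is twice the starting height of the step of `p` crossing the vertical
strip between abscissas `x` and `x+1`, plus `1` if that step is diagonal.  Comparing these
values columnwise is equivalent to comparing the heights of the paths over each strip. -/
def colVal : List Step → ℕ → ℕ
  | [], _ => 0
  | Step.N :: p, x => colVal p x + 2
  | Step.E :: _, 0 => 0
  | Step.E :: p, x+1 => colVal p x
  | Step.D :: _, 0 => 1
  | Step.D :: p, x+1 => colVal p x + 2

/-- `π` stays weakly above `ρ` (same endpoints intended). -/
def WeaklyAbove (π ρ : List Step) : Prop := ∀ x, colVal ρ x ≤ colVal π x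

/-- Replace every peak (consecutive `NE`) of a path by a diagonal step; applied to `ν`
this gives the path `μ` of the large ν-Schröder path definition. -/
def cutPeaks : List Step → List Step
  | [] => []
  | Step.N :: Step.E :: p => Step.D :: cutPeaks p
  | s :: p => s :: cutPeaks p

/-- A ν-Dyck path: an `N,E` path with the same endpoints as `ν` staying weakly above `ν`. -/
def IsNuDyck (ν π : List Step) : Prop :=
  Step.D ∉ π ∧ eLen π = eLen ν ∧ nLen π = nLen ν ∧ WeaklyAbove π ν

/-- A (small) ν-Schröder path: an `N,E,D` path with the same endpoints as `ν` staying weakly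
above `ν` (this automatically forbids diagonal steps on the ν-diagonal). -/
def IsSmallSchroder (ν π : List Step) : Prop :=
  eLen π = eLen ν ∧ nLen π = nLen ν ∧ WeaklyAbove π ν

/-- A large ν-Schröder path: an `N,E,D` path with the same endpoints as `ν` staying weakly
above the path obtained from `ν` by replacing each peak by a diagonal step. -/
def IsLargeSchroder (ν π : List Step) : Prop :=
  eLen π = eLen ν ∧ nLen π = nLen ν ∧ WeaklyAbove π (cutPeaks ν)

/-- Number of peaks (consecutive `NE` pairs). -/
def peaks (p : List Step) : ℕ := (p.zip p.tail).count (Step.N, Step.E)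

/-- Number of valleys (consecutive `EN` pairs). -/
def valleys (p : List Step) : ℕ := (p.zip p.tail).count (Step.E, Step.N)

/-- Lattice points at which valleys of a path occur (starting the path at `(x,y)`). -/
def valleyPts : List Step → ℕ → ℕ → List (ℕ × ℕ)
  | [], _, _ => []
  | Step.E :: p, x, y =>
      (if p.head? = some Step.N then [(x+1, y)] else []) ++ valleyPts p (x+1) y
  | Step.N :: p, x, y => valleyPts p x (y+1)
  | Step.D :: p, x, y => valleyPts p (x+1) (y+1)

/-- Lattice points at which high peaks (peaks strictly above `ν`) of a path occur. -/
def highPeakPts (ν : List Step) : List Step → ℕ → ℕ → List (ℕ × ℕ)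
  | [], _, _ => []
  | Step.N :: p, x, y =>
      (if p.head? = some Step.E ∧ colVal ν x < 2*(y+1) then [(x, y+1)] else []) ++
        highPeakPts ν p x (y+1)
  | Step.E :: p, x, y => highPeakPts ν p (x+1) y
  | Step.D :: p, x, y => highPeakPts ν p (x+1) (y+1)

/-- Number of high peaks of `π` relative to `ν`. -/
def highPeaks (ν π : List Step) : ℕ := (highPeakPts ν π 0 0).length

/-- j-th ν-Narayana number: number of ν-Dyck paths with exactly `j` valleys. -/
noncomputable def Nar (ν : List Step) (j : ℕ) : ℕ :=
  Nat.card {π : List Step // IsNuDyck ν π ∧ valleys π = j}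

/-- Number of small ν-Schröder paths with exactly `i` diagonal steps. -/
noncomputable def schNum (ν : List Step) (i : ℕ) : ℕ :=
  Nat.card {π : List Step // IsSmallSchroder ν π ∧ π.count Step.D = i}

/-- `lowH ν x` is the lowest height of a point of `ν` at abscissa `x`. -/
def lowH : List Step → ℕ → ℕ
  | _, 0 => 0
  | [], _+1 => 0
  | Step.N :: p, x+1 => lowH p (x+1) + 1
  | Step.E :: p, x+1 => lowH p x
  | Step.D :: p, x+1 => lowH p x + 1

/-- The lowest lattice path from `(0,0)` to `(b,a)` weakly above the line segment
from `(0,0)` to `(b,a)`. -/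
def nuAB (a b : ℕ) : List Step :=
  (List.range b).flatMap (fun x =>
    List.replicate (((x+1)*a + b - 1)/b - (x*a + b - 1)/b) Step.N ++ [Step.E])

/-- Number of large rational `(a,b)`-Schröder paths with `i` diagonal steps. -/
noncomputable def largeCount (a b i : ℕ) : ℕ :=
  Nat.card {π : List Step // IsLargeSchroder (nuAB a b) π ∧ π.count Step.D = i}

/-- Number of small rational `(a,b)`-Schröder paths with `i` diagonal steps. -/
noncomputable def smallCount (a b i : ℕ) : ℕ :=
  Nat.card {π : List Step // IsSmallSchroder (nuAB a b) π ∧ π.count Step.D = i}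

/-- Binomial coefficient with an integer lower entry (zero when negative). -/
def chooseZ (n : ℕ) (k : ℤ) : ℕ := if 0 ≤ k then n.choose k.toNat else 0

/-- The region weakly above `ν` in the rectangle `[0,b] × [0,a]`. -/
def InRegion (ν : List Step) (p : ℕ × ℕ) : Prop :=
  p.1 ≤ eLen ν ∧ p.2 ≤ nLen ν ∧ lowH ν p.1 ≤ p.2

/-- Two points of the region are ν-incompatible if one is strictly southwest of the other and
the rectangle they span lies in the region (equivalently its bottom-right corner does). -/
def Incompat (ν : List Step) (p q : ℕ × ℕ) : Prop :=
  ((p.1 < q.1 ∧ p.2 < q.2) ∨ (q.1 < p.1 ∧ q.2 < p.2)) ∧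
    InRegion ν (max p.1 q.1, min p.2 q.2)

/-- A ν-binary tree: a maximal set of pairwise ν-compatible points of the region. -/
def IsBinaryTree (ν : List Step) (T : Finset (ℕ × ℕ)) : Prop :=
  (∀ p ∈ T, InRegion ν p) ∧ (∀ p ∈ T, ∀ q ∈ T, ¬ Incompat ν p q) ∧
    ∀ r, InRegion ν r → (∀ p ∈ T, ¬ Incompat ν r p) → r ∈ T

/-- A ν-Schröder tree: pairwise ν-compatible points of the region containing the root
`(0,a)` and meeting every row and every column. -/
def IsSchroderTree (ν : List Step) (T : Finset (ℕ × ℕ)) : Prop :=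
  (∀ p ∈ T, InRegion ν p) ∧ (∀ p ∈ T, ∀ q ∈ T, ¬ Incompat ν p q) ∧
    (0, nLen ν) ∈ T ∧ (∀ y ≤ nLen ν, ∃ p ∈ T, p.2 = y) ∧ (∀ x ≤ eLen ν, ∃ p ∈ T, p.1 = x)

/-- One contraction step: delete a node, provided the result is still a ν-Schröder tree. -/
def ContractStep (ν : List Step) (T T' : Finset (ℕ × ℕ)) : Prop :=
  ∃ q ∈ T, T' = T.erase q ∧ IsSchroderTree ν T'

/-- `p` is a leaf of the (plane tree associated to the) node set `T`: no node strictly below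
it in its column and none strictly to its right in its row. -/
def IsLeafIn (T : Finset (ℕ × ℕ)) (p : ℕ × ℕ) : Prop :=
  (∀ q ∈ T, ¬(q.1 = p.1 ∧ q.2 < p.2)) ∧ (∀ q ∈ T, ¬(q.2 = p.2 ∧ p.1 < q.1))

/-- Starting points of vertical runs and ending points of horizontal runs of `ν`. -/
def leafPts (ν : List Step) : Finset (ℕ × ℕ) :=
  (valleyPts ν 0 0).toFinset ∪ (if ν.head? = some Step.N then {((0 : ℕ), (0 : ℕ))} else ∅) ∪
    (if ν.getLast? = some Step.E then {(eLen ν, nLen ν)} else ∅)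

/-- `horizNu ν x y`: maximal number of east steps that can be placed starting at `(x,y)`
before crossing `ν` (staying within the bounding rectangle). -/
def horizNu (ν : List Step) (x y : ℕ) : ℕ :=
  ((Finset.Icc 1 (eLen ν - x)).filter (fun k => lowH ν (x + k) ≤ y)).card

/-- No `N` step of the given path (started at `(x,y)`) has initial point with
`horizNu`-value `h`. -/
def noNAt (ν : List Step) (h : ℕ) : List Step → ℕ → ℕ → Prop
  | [], _, _ => True
  | Step.N :: p, x, y => horizNu ν x y ≠ h ∧ noNAt ν h p x (y+1)
  | Step.E :: p, x, y => noNAt ν h p (x+1) y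
  | Step.D :: p, x, y => noNAt ν h p (x+1) (y+1)

/-- Right contraction: replace a consecutive `EN` pair (a valley) by a `D` step. -/
def RightC (μ lam : List Step) : Prop :=
  ∃ p q, μ = p ++ Step.E :: Step.N :: q ∧ lam = p ++ Step.D :: q

/-- Left contraction: delete an `E` step together with the most recent preceding `N` step
whose initial point has the same `horizNu` statistic as the initial point of the `E` step,
shift the intermediate subpath, and place a `D` step at the initial point of the `N` step. -/
def LeftC (ν μ lam : List Step) : Prop :=
  ∃ p m q, μ = p ++ Step.N :: (m ++ Step.E :: q) ∧ lam = p ++ Step.D :: (m ++ q) ∧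
    horizNu ν (eLen p) (nLen p)
      = horizNu ν (eLen (p ++ Step.N :: m)) (nLen (p ++ Step.N :: m)) ∧
    noNAt ν (horizNu ν (eLen (p ++ Step.N :: m)) (nLen (p ++ Step.N :: m)))
      m (eLen p) (nLen p + 1)

/-- Diagonal contraction: delete an `E` step ending at the initial point `r` of a `D` step,
together with the most recent preceding `N` step whose initial point `s` satisfies
`horizNu s = horizNu r`, shift the intermediate subpath, and place a `D` step at `s`. -/
def DiagC (ν μ lam : List Step) : Prop :=
  ∃ p m q, μ = p ++ Step.N :: (m ++ Step.E :: Step.D :: q) ∧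
    lam = p ++ Step.D :: (m ++ Step.D :: q) ∧
    horizNu ν (eLen p) (nLen p)
      = horizNu ν (eLen (p ++ Step.N :: m) + 1) (nLen (p ++ Step.N :: m)) ∧
    noNAt ν (horizNu ν (eLen (p ++ Step.N :: m) + 1) (nLen (p ++ Step.N :: m)))
      m (eLen p) (nLen p + 1)

/-- Cover relation of the contraction poset of ν-Schröder paths. -/
def Covers (ν μ lam : List Step) : Prop :=
  IsSmallSchroder ν μ ∧ IsSmallSchroder ν lam ∧
    (RightC μ lam ∨ LeftC ν μ lam ∨ DiagC ν μ lam)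

/-- The Morse matching: `σ` (having a `D` step preceded by no valley) is matched with the
path `π` obtained by replacing the first such `D` step by `EN`. -/
def MorseM (ν : List Step) : Set (List Step × List Step) :=
  { z | ∃ p q, Step.D ∉ p ∧ valleys p = 0 ∧
      z.2 = p ++ Step.D :: q ∧ z.1 = p ++ Step.E :: Step.N :: q ∧ IsSmallSchroder ν z.2 }

/-- Twice the area between a small ν-Schröder path and `ν`. -/
def area2 (ν π : List Step) : ℕ :=
  ∑ x ∈ Finset.range (eLen ν), (colVal π x - colVal ν x)

/-- An `(I,J̄)`-forest: increasing, non-crossing arcs. -/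
def IsIJForest (I J : Finset ℕ) (F : Finset (ℕ × ℕ)) : Prop :=
  (∀ a ∈ F, a.1 ∈ I ∧ a.2 ∈ J ∧ a.1 < a.2) ∧
    (∀ a ∈ F, ∀ a' ∈ F, ¬(a.1 < a'.1 ∧ a'.1 < a.2 ∧ a.2 < a'.2))

/-- A covering `(I,J̄)`-forest: contains the arc `(1,n)` and has no isolated node. -/
def IsCoveringForest (n : ℕ) (I J : Finset ℕ) (F : Finset (ℕ × ℕ)) : Prop :=
  IsIJForest I J F ∧ (1, n) ∈ F ∧
    (∀ i ∈ I, ∃ a ∈ F, a.1 = i) ∧ (∀ j ∈ J, ∃ a ∈ F, a.2 = j)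

/-- The lattice path read off from the interleaving of `I` and `J̄` (elements `2,…,n-1`,
`E` for elements of `I`, `N` for the others). -/
def nuOf (n : ℕ) (I : Finset ℕ) : List Step :=
  (List.range' 2 (n - 2)).map (fun k => if k ∈ I then Step.E else Step.N)


/-! ### Auxiliary lemmas for the Morse matching theorem -/

section MorseAux

open Finset in
private theorem sum_range_split (m n : ℕ) (f : ℕ → ℕ) :
    ∑ i ∈ range (m+n), f i = ∑ i ∈ range m, f i + ∑ i ∈ range n, f (m+i) := by
  rw [Finset.range_eq_Ico, ← Finset.sum_Ico_consecutive _ (Nat.zero_le m) (Nat.le_add_right m n)]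
  congr 1
  all_goals (rw [Finset.sum_Ico_eq_sum_range]; simp)

@[simp] lemma eLen_nil : eLen ([] : List Step) = 0 := rfl
@[simp] lemma nLen_nil : nLen ([] : List Step) = 0 := rfl
@[simp] lemma eLen_N (p : List Step) : eLen (Step.N :: p) = eLen p := by
  simp [eLen, List.count_cons]
@[simp] lemma eLen_E (p : List Step) : eLen (Step.E :: p) = eLen p + 1 := by
  simp [eLen, List.count_cons]; omega
@[simp] lemma eLen_D (p : List Step) : eLen (Step.D :: p) = eLen p + 1 := by
  simp [eLen, List.count_cons]; omega
@[simp] lemma nLen_N (p : List Step) : nLen (Step.N :: p) = nLen p + 1 := by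
  simp [nLen, List.count_cons]; omega
@[simp] lemma nLen_E (p : List Step) : nLen (Step.E :: p) = nLen p := by
  simp [nLen, List.count_cons]
@[simp] lemma nLen_D (p : List Step) : nLen (Step.D :: p) = nLen p + 1 := by
  simp [nLen, List.count_cons]; omega
@[simp] lemma eLen_append (p q : List Step) : eLen (p ++ q) = eLen p + eLen q := by
  simp [eLen, List.count_append]; omega
@[simp] lemma nLen_append (p q : List Step) : nLen (p ++ q) = nLen p + nLen q := by
  simp [nLen, List.count_append]; omega

lemma colVal_append_lt : ∀ (p q : List Step) (x : ℕ), x < eLen p →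
    colVal (p ++ q) x = colVal p x
  | [], _, x, h => by simp at h
  | Step.N :: p, q, x, h => by
      have := colVal_append_lt p q x (by simpa using h)
      simpa [colVal] using this
  | Step.E :: p, q, 0, _ => rfl
  | Step.E :: p, q, x+1, h => by
      have := colVal_append_lt p q x (by simp at h; omega)
      simpa [colVal] using this
  | Step.D :: p, q, 0, _ => rfl
  | Step.D :: p, q, x+1, h => by
      have := colVal_append_lt p q x (by simp at h; omega)
      simpa [colVal] using this

lemma colVal_append_ge : ∀ (p q : List Step) (t : ℕ),
    colVal (p ++ q) (eLen p + t) = 2 * nLen p + colVal q t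
  | [], q, t => by simp [colVal]
  | Step.N :: p, q, t => by
      have := colVal_append_ge p q t
      have h1 : colVal ((Step.N :: p) ++ q) (eLen (Step.N :: p) + t)
          = colVal (p ++ q) (eLen p + t) + 2 := by
        rw [eLen_N]; rfl
      rw [h1, this, nLen_N]; ring
  | Step.E :: p, q, t => by
      have := colVal_append_ge p q t
      have h1 : colVal ((Step.E :: p) ++ q) (eLen (Step.E :: p) + t)
          = colVal (p ++ q) (eLen p + t) := by
        have h2 : eLen (Step.E :: p) + t = (eLen p + t) + 1 := by rw [eLen_E]; omega
        rw [h2]; rfl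
      rw [h1, this, nLen_E]
  | Step.D :: p, q, t => by
      have := colVal_append_ge p q t
      have h1 : colVal ((Step.D :: p) ++ q) (eLen (Step.D :: p) + t)
          = colVal (p ++ q) (eLen p + t) + 2 := by
        have h2 : eLen (Step.D :: p) + t = (eLen p + t) + 1 := by rw [eLen_D]; omega
        rw [h2]; rfl
      rw [h1, this, nLen_D]; ring

/-- Column-sum statistic. -/
def SS (p : List Step) : ℕ := ∑ x ∈ Finset.range (eLen p), colVal p x

lemma SS_append (p q : List Step) : SS (p ++ q) = SS p + 2 * nLen p * eLen q + SS q := by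
  unfold SS
  rw [eLen_append, sum_range_split]
  have h1 : ∑ i ∈ Finset.range (eLen p), colVal (p ++ q) i
      = ∑ i ∈ Finset.range (eLen p), colVal p i :=
    Finset.sum_congr rfl fun i hi => colVal_append_lt p q i (Finset.mem_range.mp hi)
  have h2 : ∑ i ∈ Finset.range (eLen q), colVal (p ++ q) (eLen p + i)
      = ∑ i ∈ Finset.range (eLen q), (2 * nLen p + colVal q i) :=
    Finset.sum_congr rfl fun i _ => colVal_append_ge p q i
  rw [h1, h2, Finset.sum_add_distrib, Finset.sum_const, Finset.card_range, smul_eq_mul]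
  ring

lemma SS_N (q : List Step) : SS (Step.N :: q) = 2 * eLen q + SS q := by
  unfold SS
  rw [eLen_N]
  have h : ∀ x, colVal (Step.N :: q) x = colVal q x + 2 := fun _ => rfl
  simp only [h]
  rw [Finset.sum_add_distrib, Finset.sum_const, Finset.card_range, smul_eq_mul]
  ring

lemma SS_E (q : List Step) : SS (Step.E :: q) = SS q := by
  unfold SS
  rw [eLen_E, Finset.sum_range_succ']
  have h : ∀ x, colVal (Step.E :: q) (x + 1) = colVal q x := fun _ => rfl
  have h0 : colVal (Step.E :: q) 0 = 0 := rfl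
  simp only [h, h0, add_zero]

lemma SS_D (q : List Step) : SS (Step.D :: q) = 2 * eLen q + SS q + 1 := by
  unfold SS
  rw [eLen_D, Finset.sum_range_succ']
  have h : ∀ x, colVal (Step.D :: q) (x + 1) = colVal q x + 2 := fun _ => rfl
  have h0 : colVal (Step.D :: q) 0 = 1 := rfl
  simp only [h, h0]
  rw [Finset.sum_add_distrib, Finset.sum_const, Finset.card_range, smul_eq_mul]
  ring

lemma SS_D_EN (p q : List Step) :
    SS (p ++ Step.D :: q) = SS (p ++ Step.E :: Step.N :: q) + 1 := by
  simp only [SS_append, SS_D, SS_E, SS_N, eLen_D, eLen_E, eLen_N, nLen_D, nLen_E, nLen_N]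
  ring

lemma SS_left (P m Q : List Step) :
    SS (P ++ Step.D :: (m ++ Q)) + (2 * nLen m + 1)
      = SS (P ++ Step.N :: (m ++ Step.E :: Q)) := by
  simp only [SS_append, SS_D, SS_E, SS_N, eLen_D, eLen_E, eLen_N, eLen_append,
    nLen_D, nLen_E, nLen_N, nLen_append]
  ring

lemma SS_diag (P m Q : List Step) :
    SS (P ++ Step.D :: (m ++ Step.D :: Q)) + (2 * nLen m + 1)
      = SS (P ++ Step.N :: (m ++ Step.E :: Step.D :: Q)) := by
  simp only [SS_append, SS_D, SS_E, SS_N, eLen_D, eLen_E, eLen_N, eLen_append,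
    nLen_D, nLen_E, nLen_N, nLen_append]
  ring

lemma valleys_cons₂ (a b : Step) (t : List Step) :
    valleys (a :: b :: t) = (if a = Step.E ∧ b = Step.N then 1 else 0) + valleys (b :: t) := by
  simp only [valleys, List.tail_cons, List.zip_cons_cons, List.count_cons]
  rcases a <;> rcases b <;> simp [add_comm]

lemma valleys_tail (a : Step) (t : List Step) (h : valleys (a :: t) = 0) : valleys t = 0 := by
  cases t with
  | nil => rfl
  | cons b t' => rw [valleys_cons₂] at h; omega

lemma valleys_N_cons (t : List Step) : valleys (Step.N :: t) = valleys t := by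
  cases t with
  | nil => rfl
  | cons b t' => rw [valleys_cons₂]; simp

lemma valleys_pos : ∀ (u v : List Step), valleys (u ++ Step.E :: Step.N :: v) ≠ 0
  | [], v => by rw [List.nil_append, valleys_cons₂]; simp
  | a :: u, v => by
      rw [List.cons_append]
      obtain ⟨c, t, hct⟩ := List.exists_cons_of_ne_nil
        (show u ++ Step.E :: Step.N :: v ≠ [] by simp)
      rw [hct, valleys_cons₂, ← hct]
      have := valleys_pos u v
      omega

lemma first_valley : ∀ (p : List Step), valleys p ≠ 0 →
    ∃ u v, p = u ++ Step.E :: Step.N :: v ∧ valleys u = 0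
  | [], h => absurd rfl h
  | [_], h => absurd rfl h
  | a :: b :: t, h => by
      by_cases hab : a = Step.E ∧ b = Step.N
      · exact ⟨[], t, by rw [hab.1, hab.2]; rfl, rfl⟩
      · rw [valleys_cons₂, if_neg hab] at h
        obtain ⟨u, v, huv, hu⟩ := first_valley (b :: t) (by omega)
        refine ⟨a :: u, v, by rw [List.cons_append, huv], ?_⟩
        cases u with
        | nil => rfl
        | cons c u' =>
            simp only [List.cons_append, List.cons.injEq] at huv
            obtain ⟨rfl, -⟩ := huv
            rw [valleys_cons₂, if_neg hab, hu]

lemma first_D : ∀ (p : List Step), Step.D ∈ p → ∃ u q, p = u ++ Step.D :: q ∧ Step.D ∉ u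
  | [], h => absurd h (by simp)
  | a :: t, h => by
      by_cases ha : a = Step.D
      · exact ⟨[], t, by rw [ha]; rfl, by simp⟩
      · have hmem : Step.D ∈ t := by
          rcases List.mem_cons.mp h with h1 | h1
          · exact absurd h1.symm ha
          · exact h1
        obtain ⟨u, q, hqu, hu⟩ := first_D t hmem
        refine ⟨a :: u, q, by rw [List.cons_append, hqu], ?_⟩
        intro hc
        rcases List.mem_cons.mp hc with h1 | h1
        · exact ha h1.symm
        · exact hu h1

lemma firstD_unique : ∀ (p p' q q' : List Step), Step.D ∉ p → Step.D ∉ p' →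
    p ++ Step.D :: q = p' ++ Step.D :: q' → p = p' ∧ q = q'
  | [], [], q, q', _, _, h => ⟨rfl, by simpa using h⟩
  | [], a :: p', q, q', _, hp', h => by
      rw [List.nil_append, List.cons_append] at h
      injection h with h1 _
      exact absurd (h1 ▸ (List.mem_cons_self : a ∈ a :: p')) hp'
  | a :: p, [], q, q', hp, _, h => by
      rw [List.nil_append, List.cons_append] at h
      injection h with h1 _
      exact absurd (h1 ▸ (List.mem_cons_self : a ∈ a :: p)) hp
  | a :: p, a' :: p', q, q', hp, hp', h => by
      rw [List.cons_append, List.cons_append] at h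
      injection h with h1 h2
      obtain ⟨h3, h4⟩ := firstD_unique p p' q q'
        (fun hh => hp (List.mem_cons_of_mem _ hh))
        (fun hh => hp' (List.mem_cons_of_mem _ hh)) h2
      exact ⟨by rw [h1, h3], h4⟩

lemma firstValley_unique : ∀ (p p' q q' : List Step), valleys p = 0 → valleys p' = 0 →
    p ++ Step.E :: Step.N :: q = p' ++ Step.E :: Step.N :: q' → p = p' ∧ q = q'
  | [], [], q, q', _, _, h => ⟨rfl, by simpa using h⟩
  | [], a :: p', q, q', _, hp', h => by
      rw [List.nil_append, List.cons_append] at h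
      injection h with h1 h2
      cases p' with
      | nil => simp at h2
      | cons b p'' =>
          rw [List.cons_append] at h2
          injection h2 with h3 h4
          rw [← h1, ← h3, valleys_cons₂] at hp'
          simp at hp'
  | a :: p, [], q, q', hp, _, h => by
      rw [List.nil_append, List.cons_append] at h
      injection h with h1 h2
      cases p with
      | nil => simp at h2
      | cons b p'' =>
          rw [List.cons_append] at h2
          injection h2 with h3 h4
          rw [h1, h3, valleys_cons₂] at hp
          simp at hp
  | a :: p, a' :: p', q, q', hp, hp', h => by
      rw [List.cons_append, List.cons_append] at h
      injection h with h1 h2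
      obtain ⟨h3, h4⟩ := firstValley_unique p p' q q'
        (valleys_tail _ _ hp) (valleys_tail _ _ hp') h2
      exact ⟨by rw [h1, h3], h4⟩

lemma cross_ne : ∀ (p p' q q' : List Step), Step.D ∉ p → valleys p = 0 →
    Step.D ∉ p' → valleys p' = 0 →
    p ++ Step.E :: Step.N :: q ≠ p' ++ Step.D :: q'
  | [], [], q, q', _, _, _, _, h => by simp at h
  | [], a :: p', q, q', _, _, hp', hv', h => by
      rw [List.nil_append, List.cons_append] at h
      injection h with h1 h2
      cases p' with
      | nil => simp at h2
      | cons b p'' =>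
          rw [List.cons_append] at h2
          injection h2 with h3 h4
          rw [← h1, ← h3, valleys_cons₂] at hv'
          simp at hv'
  | a :: p, [], q, q', hp, _, _, _, h => by
      rw [List.nil_append, List.cons_append] at h
      injection h with h1 _
      exact hp (h1 ▸ (List.mem_cons_self : a ∈ a :: p))
  | a :: p, a' :: p', q, q', hp, hv, hp', hv', h => by
      rw [List.cons_append, List.cons_append] at h
      injection h with h1 h2
      exact cross_ne p p' q q'
        (fun hh => hp (List.mem_cons_of_mem _ hh)) (valleys_tail _ _ hv)
        (fun hh => hp' (List.mem_cons_of_mem _ hh)) (valleys_tail _ _ hv') h2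

lemma prefix_of_firstD : ∀ (A p₁ r q₁ : List Step), Step.D ∉ A → Step.D ∉ p₁ →
    A ++ r = p₁ ++ Step.D :: q₁ → ∃ s, p₁ = A ++ s
  | [], p₁, r, q₁, _, _, _ => ⟨p₁, rfl⟩
  | a :: A, p₁, r, q₁, hA, hp, h => by
      cases p₁ with
      | nil =>
          rw [List.nil_append, List.cons_append] at h
          injection h with h1 _
          exact absurd (h1 ▸ (List.mem_cons_self : a ∈ a :: A)) hA
      | cons b p₂ =>
          rw [List.cons_append, List.cons_append] at h
          injection h with h1 h2
          obtain ⟨s, hs⟩ := prefix_of_firstD A p₂ r q₁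
            (fun hh => hA (List.mem_cons_of_mem _ hh))
            (fun hh => hp (List.mem_cons_of_mem _ hh)) h2
          exact ⟨s, by rw [List.cons_append, ← h1, hs]⟩

lemma colVal_D_EN (p q : List Step) (x : ℕ) :
    colVal (p ++ Step.D :: q) x
      = colVal (p ++ Step.E :: Step.N :: q) x + (if x = eLen p then 1 else 0) := by
  rcases Nat.lt_trichotomy x (eLen p) with h | h | h
  · rw [colVal_append_lt _ _ _ h, colVal_append_lt _ _ _ h, if_neg (Nat.ne_of_lt h)]
    omega
  · subst h
    have h1 := colVal_append_ge p (Step.D :: q) 0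
    have h2 := colVal_append_ge p (Step.E :: Step.N :: q) 0
    rw [Nat.add_zero] at h1 h2
    rw [h1, h2, if_pos rfl]
    rfl
  · obtain ⟨t, rfl⟩ : ∃ t, x = eLen p + (t + 1) := ⟨x - eLen p - 1, by omega⟩
    rw [colVal_append_ge, colVal_append_ge, if_neg (by omega)]
    have h1 : colVal (Step.D :: q) (t + 1) = colVal q t + 2 := rfl
    have h2 : colVal (Step.E :: Step.N :: q) (t + 1) = colVal q t + 2 := rfl
    rw [h1, h2, add_zero]

lemma colVal_even : ∀ (ν : List Step), Step.D ∉ ν → ∀ x, colVal ν x % 2 = 0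
  | [], _, _ => rfl
  | Step.N :: ν, h, x => by
      have := colVal_even ν (fun hh => h (List.mem_cons_of_mem _ hh)) x
      show (colVal ν x + 2) % 2 = 0
      omega
  | Step.E :: ν, _, 0 => rfl
  | Step.E :: ν, h, x+1 => colVal_even ν (fun hh => h (List.mem_cons_of_mem _ hh)) x
  | Step.D :: ν, h, x => absurd List.mem_cons_self h

lemma schroder_up {ν p q : List Step}
    (h : IsSmallSchroder ν (p ++ Step.E :: Step.N :: q)) :
    IsSmallSchroder ν (p ++ Step.D :: q) := by
  obtain ⟨he, hn, hw⟩ := h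
  refine ⟨by simp at he ⊢; omega, by simp at hn ⊢; omega, fun x => ?_⟩
  calc colVal ν x ≤ colVal (p ++ Step.E :: Step.N :: q) x := hw x
    _ ≤ _ := by rw [colVal_D_EN]; omega

lemma schroder_down {ν : List Step} (hν : Step.D ∉ ν) {p q : List Step}
    (h : IsSmallSchroder ν (p ++ Step.D :: q)) :
    IsSmallSchroder ν (p ++ Step.E :: Step.N :: q) := by
  obtain ⟨he, hn, hw⟩ := h
  refine ⟨by simp at he ⊢; omega, by simp at hn ⊢; omega, fun x => ?_⟩
  have h1 := hw x
  rw [colVal_D_EN] at h1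
  by_cases hx : x = eLen p
  · have h2 := colVal_even ν hν x
    have h3 : colVal (p ++ Step.E :: Step.N :: q) x = 2 * nLen p := by
      subst hx
      have h4 := colVal_append_ge p (Step.E :: Step.N :: q) 0
      rw [Nat.add_zero] at h4
      rw [h4]
      rfl
    rw [if_pos hx] at h1
    omega
  · rw [if_neg hx, add_zero] at h1
    exact h1

lemma noD_noValley : ∀ (p : List Step), Step.D ∉ p → valleys p = 0 →
    p = List.replicate (p.count Step.N) Step.N ++ List.replicate (p.count Step.E) Step.E
  | [], _, _ => rfl
  | Step.N :: p, hD, hV => by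
      have ih := noD_noValley p (fun h => hD (List.mem_cons_of_mem _ h)) (valleys_tail _ _ hV)
      rw [List.count_cons_self, List.count_cons_of_ne (by decide), List.replicate_succ,
        List.cons_append]
      exact congrArg (List.cons Step.N) ih
  | Step.E :: p, hD, hV => by
      have ih := noD_noValley p (fun h => hD (List.mem_cons_of_mem _ h)) (valleys_tail _ _ hV)
      have hN : p.count Step.N = 0 := by
        by_contra hc
        obtain ⟨k, hk⟩ : ∃ k, p.count Step.N = k + 1 := ⟨p.count Step.N - 1, by omega⟩
        have hV2 : valleys (Step.E :: p) = 0 := hV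
        rw [ih, hk, List.replicate_succ, List.cons_append, valleys_cons₂] at hV2
        simp at hV2
      have ih' : p = List.replicate (p.count Step.E) Step.E := by
        nth_rewrite 1 [ih]
        rw [hN, List.replicate_zero, List.nil_append]
      rw [List.count_cons_of_ne (by decide), List.count_cons_self, hN, List.replicate_zero,
        List.nil_append, List.replicate_succ]
      exact congrArg (List.cons Step.E) ih'
  | Step.D :: p, hD, _ => absurd List.mem_cons_self hD

lemma valleys_repE : ∀ b, valleys (List.replicate b Step.E) = 0
  | 0 => rfl
  | 1 => rfl
  | b+2 => by
      have ih := valleys_repE (b+1)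
      rw [List.replicate_succ] at ih ⊢
      rw [List.replicate_succ, valleys_cons₂]
      simp [ih]

lemma valleys_NE : ∀ a b, valleys (List.replicate a Step.N ++ List.replicate b Step.E) = 0
  | 0, b => by simpa using valleys_repE b
  | a+1, b => by
      rw [List.replicate_succ, List.cons_append, valleys_N_cons]
      exact valleys_NE a b

end MorseAux

open Fin.NatCast

/-- The contraction poset of ν-Schröder paths admits an acyclic partial
matching whose unique critical element is the path `NᵃEᵇ`: the matching pairs each path σ
having a `D` step preceded by no valley with the path π obtained by replacing the first such
`D` step by `EN`.  Explicitly: each matched pair is a cover relation; the matching is a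
partial matching; it has no alternating cycle `b₁ ≻ d(b₁) ≺ b₂ ≻ ⋯ ≺ b_n ≻ d(b_n) ≺ b₁`
with `n ≥ 2` and distinct `bᵢ`; and a ν-Schröder path is unmatched iff it equals `NᵃEᵇ`. -/
theorem morse_matching (ν : List Step) (hν : IsLatticePath ν) :
    (∀ z ∈ MorseM ν, Covers ν z.1 z.2) ∧
    (∀ z ∈ MorseM ν, ∀ w ∈ MorseM ν,
        (z.1 = w.1 ∨ z.1 = w.2 ∨ z.2 = w.1 ∨ z.2 = w.2) → z = w) ∧
    (¬ ∃ (n : ℕ) (bs ds : Fin (n + 2) → List Step), Function.Injective bs ∧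
        (∀ i, (ds i, bs i) ∈ MorseM ν) ∧ (∀ i, Covers ν (ds i) (bs (i + 1)))) ∧
    (∀ π : List Step, IsSmallSchroder ν π →
        ((∀ σ : List Step, (π, σ) ∉ MorseM ν ∧ (σ, π) ∉ MorseM ν) ↔
          π = List.replicate (nLen ν) Step.N ++ List.replicate (eLen ν) Step.E)) := by
  have hνD : Step.D ∉ ν := hν
  refine ⟨?_, ?_, ?_, ?_⟩
  · -- each matched pair is a cover relation
    rintro ⟨σ, π⟩ ⟨p, q, hp, hv, h2, h1, hπ⟩
    dsimp only at h1 h2 ⊢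
    subst h1; subst h2
    exact ⟨schroder_down hνD hπ, hπ, Or.inl ⟨p, q, rfl, rfl⟩⟩
  · -- partial matching
    rintro ⟨σ, π⟩ ⟨p, q, hp, hv, h2, h1, hπ⟩ ⟨σ', π'⟩ ⟨p', q', hp', hv', h2', h1', hπ'⟩ hcase
    dsimp only at h1 h2 h1' h2' hcase ⊢
    subst h1; subst h2; subst h1'; subst h2'
    rcases hcase with h | h | h | h
    · obtain ⟨h3, h4⟩ := firstValley_unique p p' q q' hv hv' h
      subst h3; subst h4; rfl
    · exact absurd h (cross_ne p p' q q' hp hv hp' hv')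
    · exact absurd h.symm (cross_ne p' p q' q hp' hv' hp hv)
    · obtain ⟨h3, h4⟩ := firstD_unique p p' q q' hp hp' h
      subst h3; subst h4; rfl
  · -- acyclicity
    rintro ⟨n, bs, ds, hinj, hM, hC⟩
    have hbd : ∀ i, SS (bs i) = SS (ds i) + 1 := by
      intro i
      obtain ⟨p, q, -, -, h2, h1, -⟩ := hM i
      dsimp only at h1 h2
      rw [h1, h2, SS_D_EN]
    have hstep : ∀ i : Fin (n + 2), SS (bs (i + 1)) ≤ SS (bs i) := by
      intro i
      obtain ⟨-, -, hc⟩ := hC i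
      rcases hc with ⟨u, v, hd, hb⟩ | ⟨P, m, Q, hd, hb, -, -⟩ | ⟨P, m, Q, hd, hb, -, -⟩
      · rw [hb, hbd i, hd, SS_D_EN]
      · have he := SS_left P m Q
        rw [← hd, ← hb] at he
        have := hbd i
        omega
      · have he := SS_diag P m Q
        rw [← hd, ← hb] at he
        have := hbd i
        omega
    have hg1 : ∀ j : ℕ, SS (bs ((j + 1 : ℕ) : Fin (n + 2))) ≤ SS (bs (j : Fin (n + 2))) := by
      intro j
      have h1 : ((j + 1 : ℕ) : Fin (n + 2)) = (j : Fin (n + 2)) + 1 := by push_cast; ring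
      rw [h1]
      exact hstep _
    have hmono : ∀ a k : ℕ, SS (bs ((a + k : ℕ) : Fin (n + 2))) ≤ SS (bs (a : Fin (n + 2))) := by
      intro a k
      induction k with
      | zero => exact le_refl _
      | succ k ih =>
          have := hg1 (a + k)
          rw [show a + (k+1) = (a + k) + 1 from rfl]
          exact le_trans this ih
    have heq : SS (bs 1) = SS (bs 0) := by
      have h1 : SS (bs ((1 : ℕ) : Fin (n + 2))) ≤ SS (bs ((0 : ℕ) : Fin (n + 2))) := hg1 0
      have h2 : SS (bs ((1 + (n + 1) : ℕ) : Fin (n + 2))) ≤ SS (bs ((1 : ℕ) : Fin (n + 2))) :=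
        hmono 1 (n + 1)
      have h3 : ((1 + (n + 1) : ℕ) : Fin (n + 2)) = ((0 : ℕ) : Fin (n + 2)) := by
        rw [show (1 + (n + 1) : ℕ) = n + 2 from by ring, Fin.natCast_self, Nat.cast_zero]
      rw [h3] at h2
      have h4 : ((1 : ℕ) : Fin (n + 2)) = (1 : Fin (n + 2)) := Nat.cast_one
      have h5 : ((0 : ℕ) : Fin (n + 2)) = (0 : Fin (n + 2)) := Nat.cast_zero
      rw [h4, h5] at h1 h2
      exact le_antisymm h1 h2
    obtain ⟨p, q, hp, hv, h2, h1, -⟩ := hM 0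
    obtain ⟨p₁, q₁, hp₁, hv₁, h2', h1', -⟩ := hM 1
    obtain ⟨-, -, hc⟩ := hC 0
    rw [zero_add] at hc
    dsimp only at h1 h2 h1' h2'
    have h10 : (1 : Fin (n + 2)) ≠ 0 := by
      simp [Fin.ext_iff]
    rcases hc with ⟨u, v, hd, hb⟩ | ⟨P, m, Q, hd, hb, -, -⟩ | ⟨P, m, Q, hd, hb, -, -⟩
    · -- RightC : analyse position
      rw [h1] at hd
      rcases List.append_eq_append_iff.mp hd with ⟨c, hu, hq⟩ | ⟨c, hpu, hq⟩
      · -- u = p ++ c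
        cases c with
        | nil =>
            rw [List.append_nil] at hu
            rw [List.nil_append] at hq
            injection hq with _ hq2
            injection hq2 with _ hq3
            apply h10
            apply hinj
            rw [hb, h2, hu, hq3]
        | cons d c' =>
            rw [List.cons_append] at hq
            injection hq with hq1 hq2
            cases c' with
            | nil => simp at hq2
            | cons e c'' =>
                rw [List.cons_append] at hq2
                injection hq2 with hq3 hq4
                -- d = E, e = N, u = p ++ E :: N :: c''
                have hbs1 : bs 1 = (p ++ [Step.E, Step.N]) ++ (c'' ++ Step.D :: v) := by
                  rw [hb, hu, ← hq1, ← hq3]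
                  simp
                have hDA : Step.D ∉ p ++ [Step.E, Step.N] := by
                  simp [List.mem_append]
                  exact hp
                obtain ⟨s, hs⟩ := prefix_of_firstD (p ++ [Step.E, Step.N]) p₁
                  (c'' ++ Step.D :: v) q₁ hDA hp₁ (by rw [← hbs1, h2'])
                have : valleys p₁ ≠ 0 := by
                  rw [hs, List.append_assoc]
                  exact valleys_pos p s
                exact this hv₁
      · -- p = u ++ c
        cases c with
        | nil =>
            rw [List.append_nil] at hpu
            rw [List.nil_append] at hq
            injection hq with _ hq2
            injection hq2 with _ hq3
            apply h10
            apply hinj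
            rw [hb, h2, hpu, hq3]
        | cons d c' =>
            rw [List.cons_append] at hq
            injection hq with hq1 hq2
            cases c' with
            | nil => simp at hq2
            | cons e c'' =>
                rw [List.cons_append] at hq2
                injection hq2 with hq3 hq4
                have : valleys p ≠ 0 := by
                  rw [hpu, ← hq1, ← hq3]
                  exact valleys_pos u c''
                exact this hv
    · have he := SS_left P m Q
      rw [← hd, ← hb] at he
      have h6 := hbd 0
      rw [h1, h2] at h6
      rw [h1] at he
      rw [h2] at heq
      omega
    · have he := SS_diag P m Q
      rw [← hd, ← hb] at he
      have h6 := hbd 0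
      rw [h1, h2] at h6
      rw [h1] at he
      rw [h2] at heq
      omega
  · -- critical cells
    intro π hπ
    constructor
    · intro hun
      have hD : Step.D ∉ π := by
        intro hmem
        obtain ⟨p, q, hpq, hp⟩ := first_D π hmem
        by_cases hvp : valleys p = 0
        · exact (hun (p ++ Step.E :: Step.N :: q)).2 ⟨p, q, hp, hvp, hpq, rfl, hπ⟩
        · obtain ⟨u, v, huv, hu⟩ := first_valley p hvp
          have hDu : Step.D ∉ u := fun h => hp (huv ▸ List.mem_append_left _ h)
          have hπeq : π = u ++ Step.E :: Step.N :: (v ++ Step.D :: q) := by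
            rw [hpq, huv]
            simp
          refine (hun (u ++ Step.D :: (v ++ Step.D :: q))).1
            ⟨u, v ++ Step.D :: q, hDu, hu, rfl, hπeq, ?_⟩
          exact schroder_up (hπeq ▸ hπ)
      have hV : valleys π = 0 := by
        by_contra hvp
        obtain ⟨u, v, huv, hu⟩ := first_valley π hvp
        have hDu : Step.D ∉ u := fun h => hD (huv ▸ List.mem_append_left _ h)
        refine (hun (u ++ Step.D :: v)).1 ⟨u, v, hDu, hu, rfl, huv, ?_⟩
        exact schroder_up (huv ▸ hπ)
      obtain ⟨he, hn, -⟩ := hπ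
      have hcd : π.count Step.D = 0 := by
        simp [List.count_eq_zero]
        exact hD
      have hcn : π.count Step.N = nLen ν := by
        have : nLen π = π.count Step.N + π.count Step.D := rfl
        omega
      have hce : π.count Step.E = eLen ν := by
        have : eLen π = π.count Step.E + π.count Step.D := rfl
        omega
      rw [noD_noValley π hD hV, hcn, hce]
    · rintro rfl σ
      constructor
      · rintro ⟨p, q, -, -, -, h1, -⟩
        dsimp only at h1
        have hz := valleys_NE (nLen ν) (eLen ν)
        rw [h1] at hz
        exact valleys_pos p q hz
      · rintro ⟨p, q, -, -, h2, -, -⟩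
        dsimp only at h2
        have : Step.D ∈ List.replicate (nLen ν) Step.N ++ List.replicate (eLen ν) Step.E := by
          rw [h2]; simp
        simp [List.mem_append, List.mem_replicate] at this
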